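/- Let n be a squarefree positive integer and let G be a finite (additive) abelian group. Then there exists a surjective group homomorphism G →+ ZMod n if and only if n divides the order of G. -/

import Mathlib

/-- A nontrivial vector space over `ZMod p` admits a surjective functional. -/
lemma aux_exists_surj_functional (p : ℕ) [Fact p.Prime] (V : Type*) [AddCommGroup V]
    [Module (ZMod p) V] [Nontrivial V] : ∃ f : V →+ ZMod p, Function.Surjective f := by
  let b := Module.Basis.ofVectorSpace (ZMod p) V
  obtain ⟨i⟩ := b.index_nonempty
  refine ⟨(b.coord i).toAddMonoidHom, fun c => ⟨b.repr.symm (Finsupp.single i c), ?_⟩⟩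
  simp [Module.Basis.coord_apply]

/-- For a prime `p` dividing the order of a finite abelian group `G`, there is a
surjective homomorphism `G →+ ZMod p`. -/
lemma aux_exists_surj_prime (p : ℕ) (hp : p.Prime) (G : Type*) [AddCommGroup G] [Finite G]
    (hdvd : p ∣ Nat.card G) : ∃ f : G →+ ZMod p, Function.Surjective f := by
  haveI : Fact p.Prime := ⟨hp⟩
  classical
  -- subgroup of p-th multiples
  set φ : G →+ G := AddMonoidHom.mk' (fun x => p • x) (fun a b => smul_add p a b) with hφ
  set H : AddSubgroup G := φ.range with hH
  have hHmem : ∀ x : G, p • x ∈ H := fun x => ⟨x, rfl⟩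
  letI : Module (ZMod p) (G ⧸ H) := QuotientAddGroup.zmodModule hHmem
  -- the quotient is nontrivial
  haveI : Nontrivial (G ⧸ H) := by
    by_contra hcon
    have hsub : Subsingleton (G ⧸ H) := not_nontrivial_iff_subsingleton.mp hcon
    have hsurj : Function.Surjective φ := by
      intro x
      have : (QuotientAddGroup.mk' H) x = 0 := Subsingleton.elim _ _
      exact (QuotientAddGroup.eq_zero_iff x).mp this
    have hinj : Function.Injective φ := Finite.injective_iff_surjective.mpr hsurj
    haveI : Fintype G := Fintype.ofFinite G
    obtain ⟨g, hg⟩ := exists_prime_addOrderOf_dvd_card p (by simpa [Nat.card_eq_fintype_card] using hdvd)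
    have hg0 : φ g = φ 0 := by
      simp only [hφ, AddMonoidHom.mk'_apply, smul_zero]
      rw [← hg]
      exact addOrderOf_nsmul_eq_zero g
    have : g = 0 := hinj hg0
    rw [this, addOrderOf_zero] at hg
    exact hp.ne_one hg.symm
  -- pick a basis of the vector space G ⧸ H over ZMod p
  obtain ⟨ψ, hψ⟩ := aux_exists_surj_functional p (G ⧸ H)
  exact ⟨ψ.comp (QuotientAddGroup.mk' H),
    hψ.comp (QuotientAddGroup.mk'_surjective H)⟩

/-- Let `n` be a squarefree positive integer and `G` a finite abelian (additive) group.
There exists a surjective group homomorphism `G →+ ZMod n` iff `n` divides `|G|`. -/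
theorem exists_surjective_addHom_zmod_iff_dvd_card
    (n : ℕ) (hn : Squarefree n) (hpos : 0 < n)
    (G : Type*) [AddCommGroup G] [Finite G] :
    (∃ f : G →+ ZMod n, Function.Surjective f) ↔ n ∣ Nat.card G := by
  constructor
  · rintro ⟨f, hf⟩
    have := AddSubgroup.card_dvd_of_surjective f hf
    simpa [Nat.card_zmod] using this
  · intro h
    classical
    set ι := {p : ℕ // p ∈ n.primeFactors} with hι
    have hprime : ∀ i : ι, (i : ℕ).Prime := fun i => Nat.prime_of_mem_primeFactors i.2
    have hprod : (∏ i : ι, (i : ℕ)) = n := by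
      exact (Finset.prod_coe_sort n.primeFactors (fun p => p)).trans
        (Nat.prod_primeFactors_of_squarefree hn)
    have hcop : Pairwise (Function.onFun Nat.Coprime fun i : ι => (i : ℕ)) := by
      intro i j hij
      exact (Nat.coprime_primes (hprime i) (hprime j)).mpr
        (fun hc => hij (Subtype.ext hc))
    -- surjections onto each prime factor
    have hfp : ∀ i : ι, ∃ f : G →+ ZMod (i : ℕ), Function.Surjective f := fun i =>
      aux_exists_surj_prime (i : ℕ) (hprime i) G
        ((Nat.dvd_of_mem_primeFactors i.2).trans h)
    choose fp hfp_surj using hfp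
    haveI : ∀ i : ι, NeZero ((i : ℕ)) := fun i => ⟨(hprime i).pos.ne'⟩
    -- combined map into the product
    let F : G →+ ∀ i : ι, ZMod (i : ℕ) :=
      { toFun := fun g i => fp i g
        map_zero' := by funext i; simp
        map_add' := fun a b => by funext i; simp }
    have hFi : ∀ (i : ι) (g : G), F g i = fp i g := fun _ _ => rfl
    -- the range of F is everything
    have hcardPi : Nat.card (∀ i : ι, ZMod (i : ℕ)) = n := by
      rw [Nat.card_pi]
      simp only [Nat.card_zmod]
      exact hprod
    have hrange : F.range = ⊤ := by
      apply AddSubgroup.eq_top_of_card_eq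
      have hdvd1 : Nat.card F.range ∣ n := by
        have := AddSubgroup.card_dvd_of_le (le_top (a := F.range))
        rwa [AddSubgroup.card_top, hcardPi] at this
      have hdvd2 : n ∣ Nat.card F.range := by
        refine dvd_trans (dvd_of_eq (Nat.prod_primeFactors_of_squarefree hn).symm) ?_
        apply Finset.prod_primes_dvd
        · intro p hp
          exact (Nat.prime_of_mem_primeFactors hp).prime
        · intro p hp
          have hsurj : Function.Surjective
              ((Pi.evalAddMonoidHom (fun i : ι => ZMod (i : ℕ)) (⟨p, hp⟩ : ι)).comp F.range.subtype) := by
            intro y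
            obtain ⟨g, hg⟩ := hfp_surj ⟨p, hp⟩ y
            exact ⟨⟨F g, AddMonoidHom.mem_range.mpr ⟨g, rfl⟩⟩, hg⟩
          have := AddSubgroup.card_dvd_of_surjective _ hsurj
          simpa [Nat.card_zmod] using this
      have hne : n ≠ 0 := hpos.ne'
      have : Nat.card F.range = n := Nat.dvd_antisymm hdvd1 hdvd2
      rw [this, hcardPi]
    have hFsurj : Function.Surjective F := by
      rw [← AddMonoidHom.range_eq_top]
      exact hrange
    -- compose with the Chinese remainder equivalence
    let e : (∀ i : ι, ZMod (i : ℕ)) ≃+* ZMod n :=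
      (ZMod.prodEquivPi (fun i : ι => (i : ℕ)) hcop).symm.trans (ZMod.ringEquivCongr hprod)
    exact ⟨(e.toAddEquiv.toAddMonoidHom).comp F, e.surjective.comp hFsurj⟩
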